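/- For every natural number n and every real number x, the series Σ_{ℓ=1}^{∞} 2^{−ℓ} E_n^{(2ℓ)}(ℓ + 2x − 1) converges absolutely and E_n(x) = 2^{−n} Σ_{ℓ=1}^{∞} 2^{−ℓ} E_n^{(2ℓ)}(ℓ + 2x − 1). -/

import Mathlib

open Finset

/-- The Euler numbers `E_n`: `E_0 = 1`, `E_n = 0` for odd `n`, and
`∑_{j=0}^{m} C(2m,2j) E_{2j} = 0` for `m ≥ 1`. -/
noncomputable def eulerNumber : ℕ → ℝ
  | 0 => 1
  | n + 1 =>
    if Even (n + 1) then
      -∑ j ∈ (Finset.range (n + 1)).attach,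
        ((n + 1).choose j.1 : ℝ) * eulerNumber j.1
    else 0
decreasing_by exact Finset.mem_range.mp j.2

/-- The Euler polynomial `E_n(x) = ∑_{k=0}^n C(n,k) (E_k/2^k) (x - 1/2)^{n-k}`. -/
noncomputable def eulerPoly (n : ℕ) (x : ℝ) : ℝ :=
  ∑ k ∈ Finset.range (n + 1), (n.choose k : ℝ) * (eulerNumber k / 2 ^ k) * (x - 1/2) ^ (n - k)

/-- The generalized Euler numbers `E_n^{(p)}(0)`. -/
noncomputable def genEulerNumber : ℕ → ℕ → ℝ
  | 0, n => if n = 0 then 1 else 0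
  | p + 1, n => ∑ k ∈ Finset.range (n + 1),
      (n.choose k : ℝ) * genEulerNumber p k * eulerPoly (n - k) 0

/-- The generalized Euler polynomial `E_n^{(p)}(x) = ∑_{k=0}^n C(n,k) x^k E_{n-k}^{(p)}(0)`. -/
noncomputable def genEulerPoly (p n : ℕ) (x : ℝ) : ℝ :=
  ∑ k ∈ Finset.range (n + 1), (n.choose k : ℝ) * x ^ k * genEulerNumber p (n - k)

/- ### Exponential generating series -/

noncomputable def eS (s : ℕ → ℝ) : PowerSeries ℝ := PowerSeries.mk fun n => s n / n.factorial

lemma eS_coeff (s : ℕ → ℝ) (n : ℕ) : PowerSeries.coeff n (eS s) = s n / n.factorial :=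
  PowerSeries.coeff_mk _ _

lemma eS_inj {s t : ℕ → ℝ} (h : eS s = eS t) (n : ℕ) : s n = t n := by
  have h1 := congrArg (PowerSeries.coeff n) h
  rw [eS_coeff, eS_coeff, div_eq_div_iff (by positivity) (by positivity)] at h1
  exact mul_right_cancel₀ (by positivity) h1

lemma eS_mul (s t : ℕ → ℝ) :
    eS s * eS t = eS (fun n => ∑ k ∈ range (n+1), (n.choose k : ℝ) * s k * t (n - k)) := by
  ext n
  rw [PowerSeries.coeff_mul, Finset.Nat.sum_antidiagonal_eq_sum_range_succ_mk, eS_coeff,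
    Finset.sum_div]
  refine Finset.sum_congr rfl fun k hk => ?_
  have hk' : k ≤ n := Nat.lt_succ_iff.mp (Finset.mem_range.mp hk)
  rw [eS_coeff, eS_coeff, Nat.cast_choose ℝ hk']
  have h1 : (k.factorial : ℝ) ≠ 0 := by positivity
  have h2 : ((n-k).factorial : ℝ) ≠ 0 := by positivity
  have h3 : (n.factorial : ℝ) ≠ 0 := by positivity
  field_simp

lemma eS_add (s t : ℕ → ℝ) : eS s + eS t = eS (fun n => s n + t n) := by
  ext n
  simp [eS_coeff, add_div]

lemma eS_one : eS (fun n => if n = 0 then 1 else 0) = 1 := by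
  ext n
  rw [eS_coeff, PowerSeries.coeff_one]
  split <;> simp [*]

noncomputable def EX (a : ℝ) : PowerSeries ℝ := eS (fun n => a ^ n)

lemma EX_mul (a b : ℝ) : EX a * EX b = EX (a + b) := by
  rw [EX, EX, EX, eS_mul]
  refine congrArg eS (funext fun n => ?_)
  rw [add_pow]
  exact Finset.sum_congr rfl fun k _ => by ring

lemma EX_zero : EX 0 = 1 := by
  rw [EX, ← eS_one]
  refine congrArg eS (funext fun n => ?_)
  exact zero_pow_eq n

/- ### eulerNumber facts -/

lemma eulerNumber_succ (n : ℕ) : eulerNumber (n+1) =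
    if Even (n + 1) then -∑ j ∈ Finset.range (n + 1), ((n + 1).choose j : ℝ) * eulerNumber j
    else 0 := by
  rw [eulerNumber]
  rw [Finset.sum_attach (Finset.range (n+1)) (fun j => ((n + 1).choose j : ℝ) * eulerNumber j)]

lemma eulerNumber_odd {n : ℕ} (h : Odd n) : eulerNumber n = 0 := by
  obtain ⟨m, rfl⟩ : ∃ m, n = m + 1 := by
    rcases n with _ | m
    · exact absurd h (by simp)
    · exact ⟨m, rfl⟩
  rw [eulerNumber_succ, if_neg (Nat.not_even_iff_odd.mpr h)]

lemma euler_cosh (n : ℕ) :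
    ∑ k ∈ range (n+1), (n.choose k : ℝ) * eulerNumber k * (if Even (n - k) then (1:ℝ) else 0)
      = if n = 0 then 1 else 0 := by
  rcases n with _ | m
  · simp [eulerNumber]
  · rw [if_neg (Nat.succ_ne_zero m)]
    by_cases h : Even (m+1)
    · have h1 : ∀ k ∈ range (m+2),
          ((m+1).choose k : ℝ) * eulerNumber k * (if Even (m+1-k) then (1:ℝ) else 0)
            = ((m+1).choose k : ℝ) * eulerNumber k := by
        intro k hk
        have hk' : k ≤ m + 1 := Nat.lt_succ_iff.mp (Finset.mem_range.mp hk)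
        split
        · ring
        · have hodd : Odd k := by
            rw [Nat.even_iff] at h
            rw [Nat.even_iff] at *
            rw [Nat.odd_iff]
            omega
          rw [eulerNumber_odd hodd]; ring
      rw [Finset.sum_congr rfl h1, Finset.sum_range_succ, eulerNumber_succ, if_pos h]
      simp
    · refine Finset.sum_eq_zero fun k hk => ?_
      have hk' : k ≤ m + 1 := Nat.lt_succ_iff.mp (Finset.mem_range.mp hk)
      split
      · have hodd : Odd k := by
          rw [Nat.even_iff] at *
          rw [Nat.odd_iff]
          omega
        rw [eulerNumber_odd hodd]; ring
      · ring

/- ### The basic power series -/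

noncomputable def coshSeq (n : ℕ) : ℝ := if Even n then 1 else 0
noncomputable def Ebar (n : ℕ) : ℝ := eulerNumber n / 2 ^ n
noncomputable def Cbar (n : ℕ) : ℝ := coshSeq n / 2 ^ n

lemma EC_one : eS eulerNumber * eS coshSeq = 1 := by
  rw [eS_mul, ← eS_one]
  exact congrArg eS (funext euler_cosh)

lemma EbCb_one : eS Ebar * eS Cbar = 1 := by
  rw [eS_mul, ← eS_one]
  refine congrArg eS (funext fun n => ?_)
  have : ∀ k ∈ range (n+1), (n.choose k : ℝ) * Ebar k * Cbar (n - k)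
      = ((n.choose k : ℝ) * eulerNumber k * coshSeq (n-k)) / 2 ^ n := by
    intro k hk
    have hk' : k ≤ n := Nat.lt_succ_iff.mp (Finset.mem_range.mp hk)
    have h2 : (2:ℝ) ^ k * 2 ^ (n - k) = 2 ^ n := by
      rw [← pow_add]; congr 1; omega
    rw [Ebar, Cbar, ← h2]
    field_simp
  rw [Finset.sum_congr rfl this, ← Finset.sum_div]
  simp only [coshSeq]
  rw [euler_cosh n]
  rcases eq_or_ne n 0 with rfl | h
  · norm_num
  · simp [h]

lemma twoCbar : eS Cbar + eS Cbar = EX (1/2) + EX (-(1/2)) := by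
  rw [eS_add, EX, EX, eS_add]
  refine congrArg eS (funext fun n => ?_)
  have hneg : (-(1/2) : ℝ) ^ n = (-1) ^ n * (1/2) ^ n := by
    rw [← neg_one_mul, mul_pow]
  rcases Nat.even_or_odd n with h | h
  · rw [hneg, h.neg_one_pow, one_mul]
    simp [Cbar, coshSeq, if_pos h, div_pow]
  · simp only [Cbar, coshSeq, if_neg (Nat.not_even_iff_odd.mpr h), hneg, h.neg_one_pow]
    ring

lemma twoC : eS coshSeq + eS coshSeq = EX 1 + EX (-1) := by
  rw [eS_add, EX, EX, eS_add]
  refine congrArg eS (funext fun n => ?_)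
  rcases Nat.even_or_odd n with h | h
  · simp [coshSeq, h, h.neg_one_pow]
  · simp [coshSeq, Nat.not_even_iff_odd.mpr h, h.neg_one_pow]

lemma star4 : eS eulerNumber + eS eulerNumber + eS eulerNumber + eS eulerNumber
    = eS Ebar * eS Ebar * ((1 + eS eulerNumber) + (1 + eS eulerNumber)) := by
  set E := eS eulerNumber
  set C := eS coshSeq
  set Eb := eS Ebar
  set Cb := eS Cbar
  have e1 : EX (1/2) * EX (1/2) = EX 1 := by rw [EX_mul]; norm_num
  have e2 : EX (1/2) * EX (-(1/2)) = 1 := by rw [EX_mul]; norm_num [EX_zero]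
  have e3 : EX (-(1/2)) * EX (-(1/2)) = EX (-1) := by rw [EX_mul]; norm_num
  -- 4 Cb^2 = 2 C + 2
  have h4 : (Cb + Cb) * (Cb + Cb) = (C + C) + (1 + 1) := by
    rw [twoCbar, twoC]
    linear_combination e1 + 2*e2 + e3
  -- E * (C + 1) = 1 + E
  have h5 : E * (C + 1) = 1 + E := by
    rw [mul_add, EC_one, mul_one]
  -- final
  have h6 : Eb * Cb = 1 := EbCb_one
  calc E + E + E + E
      = (E + E + E + E) * ((Eb * Cb) * (Eb * Cb)) := by rw [h6]; ring
    _ = Eb * Eb * (E * ((Cb + Cb) * (Cb + Cb))) := by ring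
    _ = Eb * Eb * (E * ((C + C) + (1 + 1))) := by rw [h4]
    _ = Eb * Eb * ((E * (C + 1)) + (E * (C + 1))) := by ring
    _ = Eb * Eb * ((1 + E) + (1 + E)) := by rw [h5]

/- ### generalized Euler series -/

lemma eulerPoly_series (x : ℝ) : eS Ebar * EX (x - 1/2) = eS (fun n => eulerPoly n x) := by
  rw [EX, eS_mul]
  exact congrArg eS (funext fun n => rfl)

lemma geN_series (p : ℕ) : eS (genEulerNumber p) = (eS Ebar * EX (-(1/2))) ^ p := by
  induction p with
  | zero =>
    rw [pow_zero, ← eS_one]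
    exact congrArg eS (funext fun n => by simp [genEulerNumber])
  | succ p ih =>
    have h0 : eS Ebar * EX (-(1/2)) = eS (fun n => eulerPoly n 0) := by
      rw [← eulerPoly_series 0]
      norm_num
    rw [pow_succ, ← ih, h0, eS_mul]
    exact congrArg eS (funext fun n => by rw [genEulerNumber])

lemma geP_series (p : ℕ) (y : ℝ) :
    eS (fun n => genEulerPoly p n y) = EX y * eS (genEulerNumber p) := by
  rw [EX, eS_mul]
  exact congrArg eS (funext fun n => by rw [genEulerPoly])

/-- The step identity. -/
lemma step (p : ℕ) (y : ℝ) (n : ℕ) :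
    genEulerPoly (p+2) n (y+1) = ∑ k ∈ range (n+1),
      (n.choose k : ℝ) * genEulerPoly 2 k 1 * genEulerPoly p (n-k) y := by
  have h : eS (fun n => genEulerPoly (p+2) n (y+1))
      = eS (fun n => genEulerPoly 2 n 1) * eS (fun n => genEulerPoly p n y) := by
    rw [geP_series, geP_series, geP_series, geN_series, geN_series, geN_series]
    have e1 : EX (y+1) = EX y * EX 1 := by rw [EX_mul]
    rw [e1]; ring
  have := eS_inj (h.trans (eS_mul _ _)) n
  exact this

/-- The main finite identity (I). -/
lemma identityI (x : ℝ) (n : ℕ) :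
    2 * (2 ^ n * eulerPoly n x) = genEulerPoly 2 n (2*x) + ∑ k ∈ range (n+1),
      (n.choose k : ℝ) * genEulerPoly 2 k 1 * (2 ^ (n-k) * eulerPoly (n-k) x) := by
  set v : ℕ → ℝ := fun m => 2 ^ m * eulerPoly m x with hv
  have hV : eS v = eS eulerNumber * EX (2*x - 1) := by
    rw [EX, eS_mul]
    refine congrArg eS (funext fun m => ?_)
    rw [hv]
    simp only [eulerPoly]
    rw [Finset.mul_sum]
    refine Finset.sum_congr rfl fun k hk => ?_
    have hk' : k ≤ m := Nat.lt_succ_iff.mp (Finset.mem_range.mp hk)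
    have h2 : (2:ℝ) ^ m = 2 ^ k * 2 ^ (m - k) := by rw [← pow_add]; congr 1; omega
    have h3 : (2*x - 1) = 2 * (x - 1/2) := by ring
    rw [h3, mul_pow, h2]
    field_simp
  have hG : ∀ y : ℝ, eS (fun m => genEulerPoly 2 m y) = eS Ebar * eS Ebar * EX (y - 1) := by
    intro y
    rw [geP_series, geN_series]
    have : EX y * (EX (-(1/2)) * EX (-(1/2))) = EX (y - 1) := by
      rw [EX_mul, EX_mul]; congr 1; ring
    calc EX y * (eS Ebar * EX (-(1/2))) ^ 2
        = eS Ebar * eS Ebar * (EX y * (EX (-(1/2)) * EX (-(1/2)))) := by ring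
      _ = eS Ebar * eS Ebar * EX (y - 1) := by rw [this]
  have hC2 : eS (fun m => genEulerPoly 2 m 1) = eS Ebar * eS Ebar := by
    rw [hG 1]
    norm_num [EX_zero]
  -- the doubled series identity
  have hmain : eS v + eS v + eS v + eS v
      = (eS (fun m => genEulerPoly 2 m (2*x)) + eS (fun m => genEulerPoly 2 m (2*x)))
        + (eS (fun m => genEulerPoly 2 m 1) * eS v + eS (fun m => genEulerPoly 2 m 1) * eS v) := by
    rw [hV, hG (2*x), hC2]
    have h1 : (2*x : ℝ) - 1 = 2*x - 1 := rfl
    have := star4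
    calc eS eulerNumber * EX (2*x-1) + eS eulerNumber * EX (2*x-1)
          + eS eulerNumber * EX (2*x-1) + eS eulerNumber * EX (2*x-1)
        = (eS eulerNumber + eS eulerNumber + eS eulerNumber + eS eulerNumber) * EX (2*x-1) := by
          ring
      _ = (eS Ebar * eS Ebar * ((1 + eS eulerNumber) + (1 + eS eulerNumber))) * EX (2*x-1) := by
          rw [star4]
      _ = (eS Ebar * eS Ebar * EX (2*x - 1) + eS Ebar * eS Ebar * EX (2*x - 1))
          + (eS Ebar * eS Ebar * (eS eulerNumber * EX (2*x-1))
            + eS Ebar * eS Ebar * (eS eulerNumber * EX (2*x-1))) := by ring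
  -- convert both sides into a single eS and take coefficients
  have hfin := eS_inj (((eS_add _ _ ▸ (eS_add _ _ ▸ (eS_add (v) (v) ▸ hmain)))).trans
    (by rw [eS_mul (fun m => genEulerPoly 2 m 1) v]
        rw [eS_add, eS_add, eS_add])) n
  simp only [hv] at hfin
  linarith [hfin]

/- ### The sequence u -/

lemma genEulerNumber_zero (p : ℕ) : genEulerNumber p 0 = 1 := by
  induction p with
  | zero => simp [genEulerNumber]
  | succ p ih => simp [genEulerNumber, ih, eulerPoly, eulerNumber]

lemma genEulerPoly_zero (p : ℕ) (y : ℝ) : genEulerPoly p 0 y = 1 := by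
  simp [genEulerPoly, genEulerNumber_zero]

noncomputable def uu (x : ℝ) (ℓ m : ℕ) : ℝ := genEulerPoly (2*ℓ) m ((ℓ:ℝ) + 2*x - 1)

noncomputable def cc (k : ℕ) : ℝ := genEulerPoly 2 k 1

lemma cc_zero : cc 0 = 1 := genEulerPoly_zero 2 1

lemma uu_rec (x : ℝ) (ℓ m : ℕ) :
    uu x (ℓ+1) m = ∑ k ∈ range (m+1), (m.choose k : ℝ) * cc k * uu x ℓ (m-k) := by
  have h1 : (2*(ℓ+1)) = 2*ℓ + 2 := by omega
  have h2 : ((ℓ+1 : ℕ) : ℝ) + 2*x - 1 = ((ℓ:ℝ) + 2*x - 1) + 1 := by push_cast; ring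
  rw [uu, h1, h2, step]
  simp only [cc, uu]

lemma uu_one (x : ℝ) (ℓ : ℕ) : uu x ℓ 0 = 1 := genEulerPoly_zero _ _

/- ### Polynomial growth bound -/

lemma uu_bound (x : ℝ) (m : ℕ) :
    ∃ D : ℝ, 0 ≤ D ∧ ∀ m' ≤ m, ∀ ℓ : ℕ, 1 ≤ ℓ → |uu x ℓ m'| ≤ D * (ℓ : ℝ) ^ m' := by
  induction m with
  | zero =>
    refine ⟨1, zero_le_one, fun m' hm' ℓ hℓ => ?_⟩
    interval_cases m'
    simp [uu_one]
  | succ m ih =>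
    obtain ⟨D, hD, hDle⟩ := ih
    set A : ℝ := ∑ k ∈ range (m+1), ((m+1).choose (k+1) : ℝ) * |cc (k+1)| with hA
    have hA0 : 0 ≤ A := Finset.sum_nonneg fun k _ => by positivity
    set B2 : ℝ := |uu x 1 (m+1)| + A * D with hB2
    have hB20 : 0 ≤ B2 := by positivity
    -- inner induction on ℓ
    have hind : ∀ ℓ : ℕ, 1 ≤ ℓ → |uu x ℓ (m+1)| ≤ B2 * (ℓ : ℝ) ^ (m+1) := by
      intro ℓ hℓ
      induction ℓ with
      | zero => omega
      | succ ℓ ih2 =>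
        rcases Nat.eq_or_lt_of_le hℓ with h1 | h1
        · have : ℓ = 0 := by omega
          subst this
          simp only [zero_add, Nat.cast_one, one_pow, mul_one]
          nlinarith [abs_nonneg (uu x 1 (m+1))]
        · have hℓ1 : 1 ≤ ℓ := by omega
          have ihl := ih2 hℓ1
          have hrec := uu_rec x ℓ (m+1)
          rw [Finset.sum_range_succ'] at hrec
          -- hrec : uu x (ℓ+1) (m+1) = ∑ k ∈ range (m+1), C(m+1,k+1) cc(k+1) uu x ℓ (m+1-(k+1))
          --        + C(m+1,0) cc 0 * uu x ℓ (m+1)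
          have hℓR : (1:ℝ) ≤ (ℓ:ℝ) := by exact_mod_cast hℓ1
          have htail : |∑ k ∈ range (m+1),
              ((m+1).choose (k+1) : ℝ) * cc (k+1) * uu x ℓ (m+1-(k+1))|
              ≤ A * D * (ℓ:ℝ) ^ m := by
            calc |∑ k ∈ range (m+1), ((m+1).choose (k+1) : ℝ) * cc (k+1) * uu x ℓ (m+1-(k+1))|
                ≤ ∑ k ∈ range (m+1), |((m+1).choose (k+1) : ℝ) * cc (k+1) * uu x ℓ (m+1-(k+1))| :=
                  Finset.abs_sum_le_sum_abs _ _
              _ ≤ ∑ k ∈ range (m+1), ((m+1).choose (k+1) : ℝ) * |cc (k+1)| * (D * (ℓ:ℝ) ^ m) := by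
                  refine Finset.sum_le_sum fun k hk => ?_
                  rw [abs_mul, abs_mul, abs_of_nonneg (by positivity : (0:ℝ) ≤ ((m+1).choose (k+1) : ℝ))]
                  have hb := hDle (m+1-(k+1)) (by omega) ℓ hℓ1
                  have hpow : (ℓ:ℝ) ^ (m+1-(k+1)) ≤ (ℓ:ℝ) ^ m :=
                    pow_le_pow_right₀ hℓR (by omega)
                  have huu : |uu x ℓ (m+1-(k+1))| ≤ D * (ℓ:ℝ) ^ m := by
                    calc |uu x ℓ (m+1-(k+1))| ≤ D * (ℓ:ℝ) ^ (m+1-(k+1)) := hb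
                      _ ≤ D * (ℓ:ℝ) ^ m := by nlinarith
                  have h0 : (0:ℝ) ≤ ((m+1).choose (k+1) : ℝ) * |cc (k+1)| := by positivity
                  exact mul_le_mul_of_nonneg_left huu h0
              _ = A * D * (ℓ:ℝ) ^ m := by rw [← Finset.sum_mul, ← hA]; ring
          have hstep : |uu x (ℓ+1) (m+1)| ≤ |uu x ℓ (m+1)| + A * D * (ℓ:ℝ)^m := by
            rw [hrec]
            have : ((m+1).choose 0 : ℝ) * cc 0 * uu x ℓ (m+1-0) = uu x ℓ (m+1) := by
              simp [cc_zero]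
            rw [this]
            calc |_ + uu x ℓ (m+1)| ≤ _ + |uu x ℓ (m+1)| := abs_add_le _ _
              _ ≤ A * D * (ℓ:ℝ)^m + |uu x ℓ (m+1)| := by linarith [htail]
              _ = |uu x ℓ (m+1)| + A * D * (ℓ:ℝ)^m := by ring
          have hgrow : B2 * (ℓ:ℝ)^(m+1) + A*D*(ℓ:ℝ)^m ≤ B2 * ((ℓ:ℝ)+1)^(m+1) := by
            have hp1 : (ℓ:ℝ)^(m+1) + (ℓ:ℝ)^m ≤ ((ℓ:ℝ)+1)^(m+1) := by
              have h1 : (ℓ:ℝ)^m * ((ℓ:ℝ)+1) = (ℓ:ℝ)^(m+1) + (ℓ:ℝ)^m := by ring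
              have h2 : (ℓ:ℝ)^m ≤ ((ℓ:ℝ)+1)^m :=
                pow_le_pow_left₀ (by positivity) (by linarith) m
              calc (ℓ:ℝ)^(m+1) + (ℓ:ℝ)^m = (ℓ:ℝ)^m * ((ℓ:ℝ)+1) := h1.symm
                _ ≤ ((ℓ:ℝ)+1)^m * ((ℓ:ℝ)+1) := by nlinarith
                _ = ((ℓ:ℝ)+1)^(m+1) := by ring
            have hAD : A * D ≤ B2 := by
              rw [hB2]; nlinarith [abs_nonneg (uu x 1 (m+1))]
            have hpm : (0:ℝ) ≤ (ℓ:ℝ)^m := by positivity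
            nlinarith
          have : |uu x (ℓ+1) (m+1)| ≤ B2 * ((ℓ:ℝ)+1)^(m+1) := by
            calc |uu x (ℓ+1) (m+1)| ≤ |uu x ℓ (m+1)| + A * D * (ℓ:ℝ)^m := hstep
              _ ≤ B2 * (ℓ:ℝ)^(m+1) + A*D*(ℓ:ℝ)^m := by linarith
              _ ≤ B2 * ((ℓ:ℝ)+1)^(m+1) := hgrow
          simpa [Nat.cast_add, Nat.cast_one] using this
    refine ⟨max D B2, le_max_of_le_left hD, fun m' hm' ℓ hℓ => ?_⟩
    rcases eq_or_lt_of_le hm' with rfl | h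
    case inl =>
      calc |uu x ℓ (m+1)| ≤ B2 * (ℓ:ℝ)^(m+1) := hind ℓ hℓ
        _ ≤ max D B2 * (ℓ:ℝ)^(m+1) := by
          have : (0:ℝ) ≤ (ℓ:ℝ)^(m+1) := by positivity
          nlinarith [le_max_right D B2]
    · calc |uu x ℓ m'| ≤ D * (ℓ:ℝ)^m' := hDle m' (by omega) ℓ hℓ
        _ ≤ max D B2 * (ℓ:ℝ)^m' := by
          have : (0:ℝ) ≤ (ℓ:ℝ)^m' := by positivity
          nlinarith [le_max_left D B2]

/- ### Summability -/

lemma uu_summable_abs (x : ℝ) (m : ℕ) :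
    Summable (fun j : ℕ => |(1/2:ℝ)^(j+1) * uu x (j+1) m|) := by
  obtain ⟨D, hD, hDle⟩ := uu_bound x m
  have hgeo : Summable (fun j : ℕ => ((j:ℝ))^m * (1/2:ℝ)^j) :=
    summable_pow_mul_geometric_of_norm_lt_one m (by rw [Real.norm_eq_abs, abs_of_nonneg] <;> norm_num)
  have hshift : Summable (fun j : ℕ => (((j+1:ℕ)):ℝ)^m * (1/2:ℝ)^(j+1)) := by
    exact_mod_cast (summable_nat_add_iff 1).mpr hgeo
  refine Summable.of_nonneg_of_le (fun j => abs_nonneg _) (fun j => ?_) (hshift.mul_left D)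
  rw [abs_mul, abs_pow]
  have h1 : |(1/2:ℝ)| = 1/2 := by norm_num
  have h2 := hDle m le_rfl (j+1) (by omega)
  rw [h1]
  have h3 : (0:ℝ) ≤ (1/2:ℝ)^(j+1) := by positivity
  calc (1/2:ℝ)^(j+1) * |uu x (j+1) m| ≤ (1/2:ℝ)^(j+1) * (D * ((j+1:ℕ):ℝ)^m) :=
        mul_le_mul_of_nonneg_left h2 h3
    _ = D * ((((j+1:ℕ)):ℝ)^m * (1/2:ℝ)^(j+1)) := by ring

lemma uu_summable (x : ℝ) (m : ℕ) :
    Summable (fun j : ℕ => (1/2:ℝ)^(j+1) * uu x (j+1) m) :=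
  summable_abs_iff.mp (uu_summable_abs x m)

noncomputable def SS (x : ℝ) (m : ℕ) : ℝ := ∑' j : ℕ, (1/2:ℝ)^(j+1) * uu x (j+1) m

lemma SS_rec (x : ℝ) (m : ℕ) :
    2 * SS x m = uu x 1 m + ∑ k ∈ range (m+1), (m.choose k : ℝ) * cc k * SS x (m-k) := by
  have h0 : SS x m = (1/2) * uu x 1 m + ∑' j : ℕ, (1/2:ℝ)^(j+1+1) * uu x (j+1+1) m := by
    rw [SS, Summable.tsum_eq_zero_add (uu_summable x m)]
    norm_num
  have h1 : ∀ j : ℕ, (1/2:ℝ)^(j+1+1) * uu x (j+1+1) m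
      = ∑ k ∈ range (m+1), ((m.choose k : ℝ) * cc k * (1/2)) * ((1/2:ℝ)^(j+1) * uu x (j+1) (m-k)) := by
    intro j
    rw [uu_rec x (j+1) m, Finset.mul_sum]
    exact Finset.sum_congr rfl fun k hk => by ring
  have h2 : ∑' j : ℕ, (1/2:ℝ)^(j+1+1) * uu x (j+1+1) m
      = ∑ k ∈ range (m+1), ((m.choose k:ℝ) * cc k * (1/2)) * SS x (m-k) := by
    rw [tsum_congr h1, Summable.tsum_finsetSum (fun k _ => Summable.mul_left _ (uu_summable x (m-k)))]
    exact Finset.sum_congr rfl fun k _ => tsum_mul_left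
  rw [h2] at h0
  have h3 : ∑ k ∈ range (m+1), ((m.choose k:ℝ) * cc k * (1/2)) * SS x (m-k)
      = (1/2) * ∑ k ∈ range (m+1), (m.choose k:ℝ) * cc k * SS x (m-k) := by
    rw [Finset.mul_sum]
    exact Finset.sum_congr rfl fun k _ => by ring
  rw [h3] at h0
  linarith

lemma SS_eq (x : ℝ) : ∀ m : ℕ, SS x m = 2^m * eulerPoly m x := by
  intro m
  induction m using Nat.strong_induction_on with
  | _ m ih =>
    have e1 := SS_rec x m
    have e2 := identityI x m
    have h1 : genEulerPoly 2 m (2*x) = uu x 1 m := by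
      have harg : ((1:ℕ):ℝ) + 2*x - 1 = 2*x := by push_cast; ring
      rw [uu, harg]
    rw [h1] at e2
    rw [Finset.sum_range_succ'] at e1 e2
    have h3 : ∑ k ∈ range m, (m.choose (k+1):ℝ) * cc (k+1) * SS x (m-(k+1))
        = ∑ k ∈ range m, (m.choose (k+1):ℝ) * cc (k+1) * (2^(m-(k+1)) * eulerPoly (m-(k+1)) x) := by
      refine Finset.sum_congr rfl fun k hk => ?_
      have hkm : k < m := Finset.mem_range.mp hk
      rw [ih (m-(k+1)) (by omega)]
    rw [h3] at e1
    simp only [cc, Nat.sub_zero, Nat.choose_zero_right, Nat.cast_one, one_mul,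
      genEulerPoly_zero] at e1 e2
    linarith

/-- `E_n(x) = 2^{-n} ∑_{ℓ=1}^∞ 2^{-ℓ} E_n^{(2ℓ)}(ℓ + 2x - 1)`, the series converging
absolutely (indexed here by `ℓ = j + 1`, `j : ℕ`). -/
theorem euler_poly_eq_tsum_genEulerPoly_two (n : ℕ) (x : ℝ) :
    Summable (fun j : ℕ =>
      |(1 / 2 : ℝ) ^ (j + 1) * genEulerPoly (2 * (j + 1)) n ((j + 1 : ℝ) + 2 * x - 1)|) ∧
    eulerPoly n x = (1 / 2 ^ n) * ∑' j : ℕ,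
      (1 / 2 : ℝ) ^ (j + 1) * genEulerPoly (2 * (j + 1)) n ((j + 1 : ℝ) + 2 * x - 1) := by
  have hfun : ∀ j : ℕ, genEulerPoly (2 * (j + 1)) n ((j + 1 : ℝ) + 2 * x - 1) = uu x (j+1) n := by
    intro j
    simp only [uu, Nat.cast_add, Nat.cast_one]
  constructor
  · have := uu_summable_abs x n
    refine this.congr fun j => ?_
    rw [hfun j]
  · have htsum : ∑' j : ℕ, (1 / 2 : ℝ) ^ (j + 1) * genEulerPoly (2 * (j + 1)) n ((j + 1 : ℝ) + 2 * x - 1)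
        = SS x n := by
      rw [SS]
      exact tsum_congr fun j => by rw [hfun j]
    rw [htsum, SS_eq x n]
    have h2 : (2:ℝ)^n ≠ 0 := by positivity
    field_simp
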